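/- With the canonical bracket {a,b} := ([ã,b̃]/p mod p) on the center of the Weyl algebra A_{n,ℤ}/p, one has {y_i, y_j} = -ω_{ij} for the central generators y_i = x̂_i^p, where ω_{ij} = δ_{i,n+j} - δ_{n+i,j}. -/

import Mathlib

/-- The standard skew-symmetric matrix `ω_{ij} = δ_{i,n+j} - δ_{n+i,j}`. -/
def weylOmega (n : ℕ) (i j : Fin (2 * n)) : ℤ :=
  (if (i : ℕ) = n + (j : ℕ) then 1 else 0) - (if n + (i : ℕ) = (j : ℕ) then 1 else 0)

/-- The defining relations `x̂_i x̂_j - x̂_j x̂_i = ω_{ij}·1` of the Weyl algebra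
of index `n`. -/
inductive WeylRel (R : Type*) [CommRing R] (n : ℕ) :
    FreeAlgebra R (Fin (2 * n)) → FreeAlgebra R (Fin (2 * n)) → Prop
  | comm (i j : Fin (2 * n)) : WeylRel R n
      (FreeAlgebra.ι R i * FreeAlgebra.ι R j - FreeAlgebra.ι R j * FreeAlgebra.ι R i)
      ((weylOmega n i j : ℤ) : FreeAlgebra R (Fin (2 * n)))

/-- The Weyl algebra of index `n` over `R`. -/
abbrev WeylAlgebra (R : Type*) [CommRing R] (n : ℕ) := RingQuot (WeylRel R n)

/-- The generator `x̂_i` of the Weyl algebra. -/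
noncomputable def weylGen (R : Type*) [CommRing R] (n : ℕ) (i : Fin (2 * n)) :
    WeylAlgebra R n :=
  RingQuot.mkAlgHom R (WeylRel R n) (FreeAlgebra.ι R i)

/-! ### General ring lemmas: commutators of powers when `[d,a] = 1` -/

section RingLemmas
variable {R : Type*} [Ring R] {a d : R}

lemma wl_da_pow (h : d * a = a * d + 1) (m : ℕ) :
    d * a ^ (m + 1) = a ^ (m + 1) * d + (m + 1) • a ^ m := by
  induction m with
  | zero => simpa using h
  | succ m ih =>
    calc d * a ^ (m + 2) = (d * a ^ (m + 1)) * a := by rw [pow_succ, ← mul_assoc]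
    _ = (a ^ (m + 1) * d + (m + 1) • a ^ m) * a := by rw [ih]
    _ = a ^ (m + 1) * (d * a) + (m + 1) • a ^ (m + 1) := by
        rw [add_mul, smul_mul_assoc, mul_assoc, ← pow_succ]
    _ = a ^ (m + 2) * d + (m + 2) • a ^ (m + 1) := by
        rw [h, mul_add, mul_one, ← mul_assoc, ← pow_succ,
          show (m+2) • a^(m+1) = (m+1) • a^(m+1) + a^(m+1) from succ_nsmul _ _]
        abel

lemma wl_pow_d_mul (h : d * a = a * d + 1) (m : ℕ) :
    d ^ (m + 1) * a = a * d ^ (m + 1) + (m + 1) • d ^ m := by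
  induction m with
  | zero => simpa using h
  | succ m ih =>
    calc d ^ (m + 2) * a = d * (d ^ (m + 1) * a) := by rw [pow_succ', mul_assoc]
    _ = d * (a * d ^ (m + 1)) + (m + 1) • (d * d ^ m) := by
        rw [ih, mul_add, mul_smul_comm]
    _ = (d * a) * d ^ (m + 1) + (m + 1) • d ^ (m + 1) := by
        rw [← mul_assoc, ← pow_succ']
    _ = d ^ (m + 2) * a - d ^ (m + 2) * a
        + (a * d ^ (m + 2) + (m + 2) • d ^ (m + 1)) := by
        rw [h, add_mul, one_mul, mul_assoc, ← pow_succ',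
          show (m+2) • d^(m+1) = (m+1) • d^(m+1) + d^(m+1) from succ_nsmul _ _]
        abel
    _ = a * d ^ (m + 2) + (m + 2) • d ^ (m + 1) := by abel

lemma wl_main (h : d * a = a * d + 1) (s : ℕ) : ∀ r : ℕ, d ^ r * a ^ s =
    ∑ k ∈ Finset.range (r + 1),
      (r.choose k * s.choose k * k.factorial) • (a ^ (s - k) * d ^ (r - k)) := by
  intro r
  induction r with
  | zero => simp
  | succ r ih =>
    have hstep : d ^ (r+1) * a ^ s = d * (d ^ r * a ^ s) := by
      rw [pow_succ', mul_assoc]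
    rw [hstep, ih, Finset.mul_sum]
    have hterm : ∀ k ∈ Finset.range (r + 1),
        d * ((r.choose k * s.choose k * k.factorial) • (a ^ (s - k) * d ^ (r - k)))
        = (r.choose k * s.choose k * k.factorial) • (a ^ (s - k) * d ^ (r + 1 - k))
          + (r.choose k * s.choose k * k.factorial * (s - k)) •
              (a ^ (s - k - 1) * d ^ (r - k)) := by
      intro k hk
      rw [Finset.mem_range, Nat.lt_succ_iff] at hk
      rw [mul_smul_comm]
      rcases Nat.eq_zero_or_pos (s - k) with h0 | hpos
      · rw [h0, mul_zero, zero_smul, add_zero, pow_zero, one_mul, one_mul,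
          ← pow_succ']
        congr 2
        omega
      · obtain ⟨m, hm⟩ : ∃ m, s - k = m + 1 := ⟨s - k - 1, by omega⟩
        have key : d * (a ^ (s - k) * d ^ (r - k))
            = a ^ (s - k) * d ^ (r + 1 - k) + (s - k) • (a ^ (s - k - 1) * d ^ (r - k)) := by
          rw [hm]
          rw [← mul_assoc, wl_da_pow h, add_mul, smul_mul_assoc,
            mul_assoc (a ^ (m+1)) d, show d * d ^ (r - k) = d ^ (r - k + 1) from
              (pow_succ' d (r - k)).symm,
            show r - k + 1 = r + 1 - k from by omega,
            show m + 1 - 1 = m from rfl]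
        rw [key, smul_add, smul_smul]
    rw [Finset.sum_congr rfl hterm, Finset.sum_add_distrib]
    have hG : ∀ k, ((r+1).choose (k+1) * s.choose (k+1) * (k+1).factorial) •
          (a ^ (s - k - 1) * d ^ (r - k))
        = (r.choose k * s.choose k * k.factorial * (s - k)) •
            (a ^ (s - k - 1) * d ^ (r - k))
          + (r.choose (k+1) * s.choose (k+1) * (k+1).factorial) •
            (a ^ (s - k - 1) * d ^ (r - k)) := by
      intro k
      rw [← add_smul]
      congr 1
      rw [Nat.choose_succ_succ, add_mul, add_mul]
      congr 1
      have h2 : s.choose (k+1) * (k+1).factorial = s.choose k * (s - k) * k.factorial := by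
        rw [Nat.factorial_succ, ← mul_assoc, Nat.choose_succ_right_eq]
      rw [mul_assoc, h2]; ring
    rw [Finset.sum_range_succ' (fun k => ((r+1).choose k * s.choose k * k.factorial) •
      (a ^ (s - k) * d ^ (r + 1 - k))) (r+1)]
    have hFk : ∀ k, ((r+1).choose (k+1) * s.choose (k+1) * (k+1).factorial) •
        (a ^ (s - (k+1)) * d ^ (r + 1 - (k+1)))
        = ((r+1).choose (k+1) * s.choose (k+1) * (k+1).factorial) •
          (a ^ (s - k - 1) * d ^ (r - k)) := by
      intro k
      rw [show s - (k+1) = s - k - 1 from by omega,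
        show r + 1 - (k+1) = r - k from by omega]
    rw [Finset.sum_congr rfl (fun k _ => hFk k)]
    rw [Finset.sum_congr rfl (fun k _ => hG k), Finset.sum_add_distrib]
    have hA : ∑ k ∈ Finset.range (r + 1),
        (r.choose k * s.choose k * k.factorial) • (a ^ (s - k) * d ^ (r + 1 - k))
        = ∑ k ∈ Finset.range (r + 1),
            (r.choose (k+1) * s.choose (k+1) * (k+1).factorial) •
              (a ^ (s - k - 1) * d ^ (r - k))
          + (1 : ℕ) • (a ^ s * d ^ (r + 1)) := by
      rw [Finset.sum_range_succ' (fun k => (r.choose k * s.choose k * k.factorial) •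
        (a ^ (s - k) * d ^ (r + 1 - k))) r]
      rw [Finset.sum_range_succ (fun k =>
        (r.choose (k+1) * s.choose (k+1) * (k+1).factorial) •
          (a ^ (s - k - 1) * d ^ (r - k))) r]
      rw [Nat.choose_succ_self, zero_mul, zero_mul, zero_smul, add_zero]
      congr 1
      · apply Finset.sum_congr rfl
        intro k _
        rw [show s - (k+1) = s - k - 1 from by omega,
          show r + 1 - (k+1) = r - k from by omega]
      · simp
    rw [hA]
    have hF0 : ((r+1).choose 0 * s.choose 0 * Nat.factorial 0) •
        (a ^ (s - 0) * d ^ (r + 1 - 0)) = (1:ℕ) • (a ^ s * d ^ (r+1)) := by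
      norm_num
    rw [hF0]
    abel

lemma wl_comm_pow {p : ℕ} (hp : p.Prime) (h : d * a = a * d + 1) :
    ∃ e : R, d ^ p * a ^ p - a ^ p * d ^ p = (p:ℤ) • (-1 : R) + ((p:ℤ)^2) • e := by
  haveI : Fact p.Prime := ⟨hp⟩
  obtain ⟨q, rfl⟩ : ∃ q, p = q + 1 := ⟨p - 1, (Nat.succ_pred_eq_of_pos hp.pos).symm⟩
  set P := q + 1 with hP
  have hmain := wl_main h P P
  rw [Finset.sum_range_succ, Finset.sum_range_succ'] at hmain
  rw [Nat.choose_self, Nat.sub_self, pow_zero, pow_zero, mul_one, one_mul,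
    mul_one, Nat.choose_zero_right, Nat.factorial_zero, mul_one, one_mul,
    Nat.sub_zero] at hmain
  have hmid : ∀ k ∈ Finset.range q,
      (P.choose (k+1) * P.choose (k+1) * (k+1).factorial) •
        (a ^ (P - (k+1)) * d ^ (P - (k+1)))
      = (P^2) • (((P.choose (k+1) / P)^2 * (k+1).factorial) •
        (a ^ (P - (k+1)) * d ^ (P - (k+1)))) := by
    intro k hk
    rw [Finset.mem_range] at hk
    obtain ⟨t, ht⟩ : P ∣ P.choose (k+1) :=
      hp.dvd_choose_self (Nat.succ_ne_zero k) (by omega)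
    rw [ht, Nat.mul_div_cancel_left t (by omega : 0 < P), smul_smul]
    congr 1
    ring
  rw [Finset.sum_congr rfl hmid, ← Finset.smul_sum] at hmain
  set E₀ : R := ∑ k ∈ Finset.range q,
    (((P.choose (k+1) / P)^2 * (k+1).factorial) •
      (a ^ (P - (k+1)) * d ^ (P - (k+1)))) with hE₀
  have hw : ((q.factorial : ℤ) : ZMod P) = -1 := by
    have := ZMod.wilsons_lemma (p := P)
    rw [show P - 1 = q from rfl] at this
    push_cast
    exact this
  have hdvd : (P:ℤ) ∣ (q.factorial : ℤ) + 1 := by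
    rw [← ZMod.intCast_zmod_eq_zero_iff_dvd]
    push_cast [hw]
    ring
  obtain ⟨m, hm⟩ := hdvd
  have hmz : (q.factorial : ℤ) = (P:ℤ) * m - 1 := by linarith
  have hfac : ((P.factorial : ℤ)) = (P:ℤ)^2 * m - (P:ℤ) := by
    rw [Nat.factorial_succ]
    push_cast [hmz]
    rw [hP]; push_cast
    ring
  refine ⟨E₀ + m • (1:R), ?_⟩
  rw [hmain]
  have h1 : (P^2 : ℕ) • E₀ = ((P:ℤ)^2) • E₀ := by
    rw [← natCast_zsmul]
    push_cast
    ring_nf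
  have h2 : (P.factorial) • (1:R) = ((P.factorial : ℤ)) • (1:R) := by
    rw [← natCast_zsmul]
  rw [smul_add, h1, h2, hfac, one_smul]
  have h3 : ((P:ℤ)^2 * m - (P:ℤ)) • (1:R)
      = (P:ℤ) • (-1:R) + ((P:ℤ)^2) • (m • (1:R)) := by
    rw [sub_smul, mul_smul, smul_neg]
    abel
  rw [h3]
  abel
end RingLemmas

/-! ### The standard representation on `(Fin n →₀ ℕ) →₀ ℤ` -/

section Rep
variable {n : ℕ}

abbrev WM (n : ℕ) := (Fin n →₀ ℕ) →₀ ℤ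

noncomputable def Xop (k : Fin n) : WM n →ₗ[ℤ] WM n :=
  Finsupp.lmapDomain ℤ ℤ (fun m => m + Finsupp.single k 1)

noncomputable def Dop (k : Fin n) : WM n →ₗ[ℤ] WM n :=
  Finsupp.lsum ℤ (fun m => (m k : ℤ) • Finsupp.lsingle (m - Finsupp.single k 1))

@[simp] lemma Xop_single (k : Fin n) (m : Fin n →₀ ℕ) (c : ℤ) :
    Xop k (Finsupp.single m c) = Finsupp.single (m + Finsupp.single k 1) c := by
  simp [Xop, Finsupp.lmapDomain_apply, Finsupp.mapDomain_single]

@[simp] lemma Dop_single (k : Fin n) (m : Fin n →₀ ℕ) (c : ℤ) :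
    Dop k (Finsupp.single m c) =
      (m k : ℤ) • Finsupp.single (m - Finsupp.single k 1) c := by
  simp [Dop]

lemma Xop_comm (k l : Fin n) : Xop k * Xop l = Xop l * Xop k := by
  apply Finsupp.lhom_ext
  intro m c
  simp only [Module.End.mul_apply, Xop_single]
  rw [add_right_comm]

lemma Dop_comm (k l : Fin n) : Dop k * Dop l = Dop l * Dop k := by
  rcases eq_or_ne k l with rfl | hkl
  · rfl
  apply Finsupp.lhom_ext
  intro m c
  simp only [Module.End.mul_apply, Dop_single, map_smul, smul_smul]
  rw [Finsupp.tsub_apply, Finsupp.tsub_apply,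
    Finsupp.single_eq_of_ne' hkl.symm, Finsupp.single_eq_of_ne' hkl]
  rw [Nat.sub_zero, Nat.sub_zero, mul_comm ((m k : ℤ)), tsub_tsub, tsub_tsub,
      add_comm (Finsupp.single l 1)]

lemma DXop_comm (k l : Fin n) :
    Dop k * Xop l - Xop l * Dop k
      = if k = l then (1 : Module.End ℤ (WM n)) else 0 := by
  rcases eq_or_ne k l with rfl | hkl
  · rw [if_pos rfl]
    rw [sub_eq_iff_eq_add]
    apply Finsupp.lhom_ext
    intro m c
    simp only [Module.End.mul_apply, Xop_single, Dop_single, map_smul,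
      Module.End.one_apply, LinearMap.add_apply]
    rw [Finsupp.add_apply, Finsupp.single_apply, if_pos rfl]
    rw [add_tsub_cancel_right]
    rcases Nat.eq_zero_or_pos (m k) with h0 | hpos
    · rw [h0]
      simp
    · have hmk : m - Finsupp.single k 1 + Finsupp.single k 1 = m := by
        rw [tsub_add_cancel_of_le]
        rw [Finsupp.single_le_iff]
        omega
      rw [hmk]
      push_cast
      rw [add_smul, one_smul]
      abel
  · rw [if_neg hkl]
    rw [sub_eq_zero]
    apply Finsupp.lhom_ext
    intro m c
    simp only [Module.End.mul_apply, Xop_single, Dop_single, map_smul]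
    rw [Finsupp.add_apply, Finsupp.single_eq_of_ne' hkl.symm, add_zero]
    have hidx : (m + Finsupp.single l 1) - Finsupp.single k 1
        = (m - Finsupp.single k 1) + Finsupp.single l 1 := by
      ext t
      rw [Finsupp.tsub_apply, Finsupp.add_apply, Finsupp.add_apply,
        Finsupp.tsub_apply]
      rcases eq_or_ne t k with rfl | htk
      · rw [Finsupp.single_eq_of_ne' (fun hh => hkl hh.symm)]
        omega
      · rw [Finsupp.single_eq_of_ne' (fun hh => htk hh.symm)]
        omega
    rw [hidx]

noncomputable def Lop (n : ℕ) (i : Fin (2 * n)) : Module.End ℤ (WM n) :=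
  if h : (i : ℕ) < n then Xop ⟨i, h⟩ else Dop ⟨(i : ℕ) - n, by omega⟩

lemma Lop_rel (i j : Fin (2 * n)) :
    Lop n i * Lop n j - Lop n j * Lop n i
      = ((weylOmega n i j : ℤ) : Module.End ℤ (WM n)) := by
  have hi2 := i.isLt
  have hj2 := j.isLt
  have hcast : ∀ z : ℤ, ((z : ℤ) : Module.End ℤ (WM n)) = z • 1 := fun z => by
    rw [← zsmul_one z]
  unfold Lop
  rcases Nat.lt_or_ge (i : ℕ) n with hi | hi <;>
    rcases Nat.lt_or_ge (j : ℕ) n with hj | hj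
  · have hom : weylOmega n i j = 0 := by
      unfold weylOmega
      rw [if_neg (show ¬((i:ℕ) = n + (j:ℕ)) by omega),
        if_neg (show ¬(n + (i:ℕ) = (j:ℕ)) by omega)]
      norm_num
    rw [dif_pos hi, dif_pos hj, Xop_comm, sub_self, hom]
    norm_num
  · rw [dif_pos hi, dif_neg (by omega)]
    have h := DXop_comm (n := n) ⟨(j:ℕ) - n, by omega⟩ ⟨(i:ℕ), hi⟩
    simp only [Fin.mk.injEq] at h
    rw [← neg_sub, h]
    by_cases hij : n + (i:ℕ) = (j:ℕ)
    · have hom : weylOmega n i j = -1 := by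
        unfold weylOmega
        rw [if_neg (show ¬((i:ℕ) = n + (j:ℕ)) by omega), if_pos hij]
        norm_num
      rw [if_pos (show (j:ℕ) - n = (i:ℕ) by omega), hom, hcast]
      norm_num
    · have hom : weylOmega n i j = 0 := by
        unfold weylOmega
        rw [if_neg (show ¬((i:ℕ) = n + (j:ℕ)) by omega), if_neg hij]
        norm_num
      rw [if_neg (show ¬((j:ℕ) - n = (i:ℕ)) by omega), hom, hcast]
      norm_num
  · rw [dif_neg (by omega), dif_pos hj]
    have h := DXop_comm (n := n) ⟨(i:ℕ) - n, by omega⟩ ⟨(j:ℕ), hj⟩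
    simp only [Fin.mk.injEq] at h
    rw [h]
    by_cases hij : (i:ℕ) = n + (j:ℕ)
    · have hom : weylOmega n i j = 1 := by
        unfold weylOmega
        rw [if_pos hij, if_neg (show ¬(n + (i:ℕ) = (j:ℕ)) by omega)]
        norm_num
      rw [if_pos (show (i:ℕ) - n = (j:ℕ) by omega), hom, hcast]
      norm_num
    · have hom : weylOmega n i j = 0 := by
        unfold weylOmega
        rw [if_neg hij, if_neg (show ¬(n + (i:ℕ) = (j:ℕ)) by omega)]
        norm_num
      rw [if_neg (show ¬((i:ℕ) - n = (j:ℕ)) by omega), hom, hcast]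
      norm_num
  · have hom : weylOmega n i j = 0 := by
      unfold weylOmega
      rw [if_neg (show ¬((i:ℕ) = n + (j:ℕ)) by omega),
        if_neg (show ¬(n + (i:ℕ) = (j:ℕ)) by omega)]
      norm_num
    rw [dif_neg (by omega), dif_neg (by omega), Dop_comm, sub_self, hom]
    norm_num

noncomputable def weylRho (n : ℕ) : WeylAlgebra ℤ n →ₐ[ℤ] Module.End ℤ (WM n) :=
  RingQuot.liftAlgHom ℤ ⟨FreeAlgebra.lift ℤ (Lop n), by
    rintro x y ⟨i, j⟩
    simp only [map_sub, map_mul, FreeAlgebra.lift_ι_apply, map_intCast]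
    exact Lop_rel i j⟩

@[simp] lemma weylRho_gen (i : Fin (2 * n)) :
    weylRho n (weylGen ℤ n i) = Lop n i := by
  rw [weylGen, weylRho, RingQuot.liftAlgHom_mkAlgHom_apply, FreeAlgebra.lift_ι_apply]

/-! Powers and products of the operators acting on basis vectors. -/

lemma Xop_pow_single (k : Fin n) (e : ℕ) (m : Fin n →₀ ℕ) (c : ℤ) :
    (Xop k ^ e) (Finsupp.single m c)
      = Finsupp.single (m + e • Finsupp.single k 1) c := by
  induction e generalizing m with
  | zero => simp
  | succ e ih =>
    rw [pow_succ, Module.End.mul_apply, Xop_single, ih, succ_nsmul, ← add_assoc,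
      add_right_comm]

lemma Dop_pow_single (k : Fin n) (e : ℕ) (m : Fin n →₀ ℕ) (c : ℤ) :
    (Dop k ^ e) (Finsupp.single m c)
      = (((m k).descFactorial e : ℕ) : ℤ) •
          Finsupp.single (m - e • Finsupp.single k 1) c := by
  induction e with
  | zero => simp
  | succ e ih =>
    rw [pow_succ', Module.End.mul_apply, ih, map_smul, Dop_single, smul_smul]
    have h1 : ((m - e • Finsupp.single k 1 : Fin n →₀ ℕ) k) = m k - e := by
      rw [Finsupp.tsub_apply, Finsupp.smul_apply, Finsupp.single_eq_same,
        smul_eq_mul, mul_one]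
    have h2 : (m - e • Finsupp.single k 1 - Finsupp.single k 1 : Fin n →₀ ℕ)
        = m - (e + 1) • Finsupp.single k 1 := by
      rw [tsub_tsub, succ_nsmul]
    rw [h1, h2, Nat.descFactorial_succ]
    push_cast
    ring_nf

lemma Xprod_single (a : Fin n →₀ ℕ) (s : Finset (Fin n))
    (comm : (↑s : Set (Fin n)).Pairwise (Function.onFun Commute fun k => Xop k ^ a k))
    (m : Fin n →₀ ℕ) (c : ℤ) :
    (s.noncommProd (fun k => Xop k ^ a k) comm) (Finsupp.single m c)
      = Finsupp.single (m + ∑ k ∈ s, a k • Finsupp.single k 1) c := by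
  classical
  induction s using Finset.induction_on generalizing m with
  | empty => simp
  | insert k s hx ih =>
    rw [Finset.noncommProd_insert_of_notMem _ _ _ _ hx, Module.End.mul_apply,
      ih _ m, Xop_pow_single, Finset.sum_insert hx, add_assoc,
      add_comm (∑ x ∈ s, a x • Finsupp.single x 1)]

lemma Dprod_single (b : Fin n →₀ ℕ) (s : Finset (Fin n))
    (comm : (↑s : Set (Fin n)).Pairwise (Function.onFun Commute fun k => Dop k ^ b k))
    (m : Fin n →₀ ℕ) (c : ℤ) :
    (s.noncommProd (fun k => Dop k ^ b k) comm) (Finsupp.single m c)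
      = ((∏ k ∈ s, (m k).descFactorial (b k) : ℕ) : ℤ) •
          Finsupp.single (m - ∑ k ∈ s, b k • Finsupp.single k 1) c := by
  classical
  induction s using Finset.induction_on with
  | empty => simp
  | insert k s hx ih =>
    rw [Finset.noncommProd_insert_of_notMem _ _ _ _ hx, Module.End.mul_apply,
      ih (comm.mono (by simp [Finset.subset_insert, Finset.coe_subset])),
      map_smul, Dop_pow_single, smul_smul]
    have h1 : ((m - ∑ x ∈ s, b x • Finsupp.single x 1 : Fin n →₀ ℕ) k) = m k := by
      rw [Finsupp.tsub_apply]
      have : (∑ x ∈ s, b x • Finsupp.single x (1:ℕ)) k = 0 := by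
        rw [Finsupp.finset_sum_apply]
        apply Finset.sum_eq_zero
        intro x hxs
        rw [Finsupp.smul_apply, Finsupp.single_eq_of_ne' (fun h : x = k => hx (h ▸ hxs)),
          smul_eq_mul, mul_zero]
      rw [this, Nat.sub_zero]
    have h2 : (m - ∑ x ∈ s, b x • Finsupp.single x 1 - b k • Finsupp.single k 1 :
          Fin n →₀ ℕ)
        = m - ∑ x ∈ insert k s, b x • Finsupp.single x 1 := by
      rw [tsub_tsub, Finset.sum_insert hx, add_comm]
    rw [h1, h2, Finset.prod_insert hx]
    push_cast
    ring_nf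

lemma sum_univ_smul_single (a : Fin n →₀ ℕ) :
    ∑ k : Fin n, a k • Finsupp.single k (1:ℕ) = a := by
  ext t
  rw [Finsupp.finset_sum_apply]
  rw [Finset.sum_eq_single t]
  · rw [Finsupp.smul_apply, Finsupp.single_eq_same, smul_eq_mul, mul_one]
  · intro x _ hxt
    rw [Finsupp.smul_apply, Finsupp.single_eq_of_ne' hxt, smul_eq_mul, mul_zero]
  · intro h
    exact absurd (Finset.mem_univ t) h

end Rep

/-! ### Normal monomials span the Weyl algebra -/

section Span
variable {n : ℕ}

noncomputable def genX (k : Fin n) : WeylAlgebra ℤ n :=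
  weylGen ℤ n ⟨(k : ℕ), by omega⟩

noncomputable def genD (k : Fin n) : WeylAlgebra ℤ n :=
  weylGen ℤ n ⟨n + (k : ℕ), by omega⟩

lemma gen_rel (i j : Fin (2*n)) :
    weylGen ℤ n i * weylGen ℤ n j - weylGen ℤ n j * weylGen ℤ n i
      = ((weylOmega n i j : ℤ) : WeylAlgebra ℤ n) := by
  have h := RingQuot.mkAlgHom_rel ℤ (WeylRel.comm (R := ℤ) (n := n) i j)
  rw [map_sub, map_mul, map_mul, map_intCast] at h
  exact h

lemma genX_commute (k l : Fin n) : Commute (genX k) (genX l) := by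
  have h := gen_rel (n := n) ⟨(k:ℕ), by omega⟩ ⟨(l:ℕ), by omega⟩
  have hom : weylOmega n ⟨(k:ℕ), by omega⟩ ⟨(l:ℕ), by omega⟩ = 0 := by
    unfold weylOmega
    rw [if_neg (show ¬((k:ℕ) = n + (l:ℕ)) by have := k.isLt; omega),
      if_neg (show ¬(n + (k:ℕ) = (l:ℕ)) by have := l.isLt; omega)]
    norm_num
  rw [hom] at h
  push_cast at h
  exact sub_eq_zero.mp h

lemma genD_commute (k l : Fin n) : Commute (genD k) (genD l) := by
  have h := gen_rel (n := n) ⟨n + (k:ℕ), by omega⟩ ⟨n + (l:ℕ), by omega⟩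
  have hom : weylOmega n ⟨n + (k:ℕ), by omega⟩ ⟨n + (l:ℕ), by omega⟩ = 0 := by
    unfold weylOmega
    rw [if_neg (show ¬(n + (k:ℕ) = n + (n + (l:ℕ))) by have := l.isLt; omega),
      if_neg (show ¬(n + (n + (k:ℕ)) = n + (l:ℕ)) by have := k.isLt; omega)]
    norm_num
  rw [hom] at h
  push_cast at h
  exact sub_eq_zero.mp h

lemma genDX (k l : Fin n) :
    genD k * genX l = genX l * genD k + (if k = l then (1 : WeylAlgebra ℤ n) else 0) := by
  have h := gen_rel (n := n) ⟨n + (k:ℕ), by omega⟩ ⟨(l:ℕ), by omega⟩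
  have hom : weylOmega n ⟨n + (k:ℕ), by omega⟩ ⟨(l:ℕ), by omega⟩
      = if k = l then 1 else 0 := by
    unfold weylOmega
    rw [if_neg (show ¬(n + (n + (k:ℕ)) = (l:ℕ)) by have := l.isLt; omega)]
    by_cases hkl : k = l
    · rw [if_pos (show n + (k:ℕ) = n + (l:ℕ) by rw [hkl]), if_pos hkl]
      norm_num
    · rw [if_neg (show ¬(n + (k:ℕ) = n + (l:ℕ)) by
        intro hc; exact hkl (Fin.ext (by omega))), if_neg hkl]
      norm_num
  rw [hom] at h
  have hcast : (((if k = l then (1:ℤ) else 0) : ℤ) : WeylAlgebra ℤ n)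
      = if k = l then (1 : WeylAlgebra ℤ n) else 0 := by
    split_ifs <;> simp
  rw [hcast] at h
  have h' : genD k * genX l - genX l * genD k
      = (if k = l then (1 : WeylAlgebra ℤ n) else 0) := h
  linear_combination (norm := noncomm_ring) h'

lemma genDX_commute (k l : Fin n) (h : k ≠ l) : Commute (genD k) (genX l) := by
  have := genDX k l
  rw [if_neg h, add_zero] at this
  exact this

noncomputable def wXP (a : Fin n →₀ ℕ) : WeylAlgebra ℤ n :=
  Finset.univ.noncommProd (fun k => genX k ^ a k)
    (Pairwise.set_pairwise (fun x y _ => (genX_commute x y).pow_pow _ _) _)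

noncomputable def wDP (b : Fin n →₀ ℕ) : WeylAlgebra ℤ n :=
  Finset.univ.noncommProd (fun k => genD k ^ b k)
    (Pairwise.set_pairwise (fun x y _ => (genD_commute x y).pow_pow _ _) _)

noncomputable def wW (q : (Fin n →₀ ℕ) × (Fin n →₀ ℕ)) : WeylAlgebra ℤ n :=
  wXP q.1 * wDP q.2

lemma wXP_decomp (a : Fin n →₀ ℕ) (k : Fin n) :
    wXP a = genX k ^ a k * (Finset.univ.erase k).noncommProd (fun l => genX l ^ a l)
      (Pairwise.set_pairwise (fun x y _ => (genX_commute x y).pow_pow _ _) _) := by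
  rw [wXP]
  exact (Finset.mul_noncommProd_erase _ (Finset.mem_univ k) _ _).symm

lemma wDP_decomp (b : Fin n →₀ ℕ) (k : Fin n) :
    wDP b = genD k ^ b k * (Finset.univ.erase k).noncommProd (fun l => genD l ^ b l)
      (Pairwise.set_pairwise (fun x y _ => (genD_commute x y).pow_pow _ _) _) := by
  rw [wDP]
  exact (Finset.mul_noncommProd_erase _ (Finset.mem_univ k) _ _).symm

lemma erase_congr_X (a : Fin n →₀ ℕ) (k : Fin n) :
    (Finset.univ.erase k).noncommProd (fun l => genX l ^ ((a + Finsupp.single k 1 : Fin n →₀ ℕ) l))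
      (Pairwise.set_pairwise (fun x y _ => (genX_commute x y).pow_pow _ _) _)
    = (Finset.univ.erase k).noncommProd (fun l => genX l ^ a l)
      (Pairwise.set_pairwise (fun x y _ => (genX_commute x y).pow_pow _ _) _) := by
  apply Finset.noncommProd_congr rfl
  intro x hx
  rw [Finsupp.add_apply, Finsupp.single_eq_of_ne'
    (fun h : k = x => (Finset.mem_erase.mp hx).1 h.symm), add_zero]

lemma erase_congr_D (b : Fin n →₀ ℕ) (k : Fin n) :
    (Finset.univ.erase k).noncommProd (fun l => genD l ^ ((b - Finsupp.single k 1 : Fin n →₀ ℕ) l))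
      (Pairwise.set_pairwise (fun x y _ => (genD_commute x y).pow_pow _ _) _)
    = (Finset.univ.erase k).noncommProd (fun l => genD l ^ b l)
      (Pairwise.set_pairwise (fun x y _ => (genD_commute x y).pow_pow _ _) _) := by
  apply Finset.noncommProd_congr rfl
  intro x hx
  rw [Finsupp.tsub_apply, Finsupp.single_eq_of_ne'
    (fun h : k = x => (Finset.mem_erase.mp hx).1 h.symm), Nat.sub_zero]

lemma wXP_mul_genX (a : Fin n →₀ ℕ) (k : Fin n) :
    wXP a * genX k = wXP (a + Finsupp.single k 1) := by
  set E := (Finset.univ.erase k).noncommProd (fun l => genX l ^ a l)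
    (Pairwise.set_pairwise (fun x y _ => (genX_commute x y).pow_pow _ _) _) with hE
  have hcomm : Commute (genX k) E := by
    apply Finset.noncommProd_commute
    intro x hx
    exact ((genX_commute k x)).pow_right _
  rw [wXP_decomp a k, wXP_decomp (a + Finsupp.single k 1) k, ← hE, erase_congr_X,
    ← hE, mul_assoc, ← hcomm.eq, ← mul_assoc, ← pow_succ,
    Finsupp.add_apply, Finsupp.single_eq_same]

lemma wDP_mul_genD (b : Fin n →₀ ℕ) (k : Fin n) :
    wDP b * genD k = wDP (b + Finsupp.single k 1) := by
  set E := (Finset.univ.erase k).noncommProd (fun l => genD l ^ b l)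
    (Pairwise.set_pairwise (fun x y _ => (genD_commute x y).pow_pow _ _) _) with hE
  have hE' : (Finset.univ.erase k).noncommProd
      (fun l => genD l ^ ((b + Finsupp.single k 1 : Fin n →₀ ℕ) l))
      (Pairwise.set_pairwise (fun x y _ => (genD_commute x y).pow_pow _ _) _) = E := by
    apply Finset.noncommProd_congr rfl
    intro x hx
    rw [Finsupp.add_apply, Finsupp.single_eq_of_ne'
      (fun h : k = x => (Finset.mem_erase.mp hx).1 h.symm), add_zero]
  have hcomm : Commute (genD k) E := by
    apply Finset.noncommProd_commute
    intro x hx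
    exact ((genD_commute k x)).pow_right _
  rw [wDP_decomp b k, wDP_decomp (b + Finsupp.single k 1) k, hE']
  rw [← hE, mul_assoc, ← hcomm.eq, ← mul_assoc, ← pow_succ,
    Finsupp.add_apply, Finsupp.single_eq_same]

lemma wDP_mul_genX (b : Fin n →₀ ℕ) (k : Fin n) :
    wDP b * genX k = genX k * wDP b + ((b k : ℤ)) • wDP (b - Finsupp.single k 1) := by
  set E := (Finset.univ.erase k).noncommProd (fun l => genD l ^ b l)
    (Pairwise.set_pairwise (fun x y _ => (genD_commute x y).pow_pow _ _) _) with hE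
  have hcomm : Commute (genX k) E := by
    apply Finset.noncommProd_commute
    intro x hx
    exact ((genDX_commute x k (Finset.mem_erase.mp hx).1).symm).pow_right _
  have hdx : genD k * genX k = genX k * genD k + 1 := by
    have := genDX k k
    rwa [if_pos rfl] at this
  rcases hbk : b k with _ | m
  · -- b k = 0
    have hb0 : wDP b = E := by
      rw [wDP_decomp b k, hbk, pow_zero, one_mul]
    simp only [Nat.cast_zero, zero_smul, add_zero]
    rw [hb0, ← hcomm.eq]
    simp
  · -- b k = m + 1
    have hb : wDP b = genD k ^ (m + 1) * E := by rw [wDP_decomp b k, hbk]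
    have hbe : wDP (b - Finsupp.single k 1) = genD k ^ m * E := by
      rw [wDP_decomp (b - Finsupp.single k 1) k, erase_congr_D, ← hE]
      congr 2
      rw [Finsupp.tsub_apply, Finsupp.single_eq_same, hbk]
      omega
    rw [hb, hbe, mul_assoc, ← hcomm.eq, ← mul_assoc, wl_pow_d_mul hdx m,
      add_mul, smul_mul_assoc, mul_assoc,
      ← natCast_zsmul (genD k ^ m * E) (m+1)]

noncomputable def WS (n : ℕ) : Submodule ℤ (WeylAlgebra ℤ n) :=
  Submodule.span ℤ (Set.range (wW (n := n)))

lemma wW_mem (q : (Fin n →₀ ℕ) × (Fin n →₀ ℕ)) : wW q ∈ WS n :=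
  Submodule.subset_span ⟨q, rfl⟩

lemma one_mem_WS : (1 : WeylAlgebra ℤ n) ∈ WS n := by
  have h : wW ((0 : Fin n →₀ ℕ), (0 : Fin n →₀ ℕ)) = 1 := by
    rw [wW]
    have h1 : wXP (0 : Fin n →₀ ℕ) = 1 := by
      rw [wXP]
      rw [Finset.noncommProd_eq_pow_card _ _ _ (1 : WeylAlgebra ℤ n)
        (fun x _ => by simp), one_pow]
    have h2 : wDP (0 : Fin n →₀ ℕ) = 1 := by
      rw [wDP]
      rw [Finset.noncommProd_eq_pow_card _ _ _ (1 : WeylAlgebra ℤ n)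
        (fun x _ => by simp), one_pow]
    rw [h1, h2]
    try rw [one_mul]
  rw [← h]
  exact wW_mem _

set_option maxHeartbeats 1000000 in
lemma wW_mul_gen (q : (Fin n →₀ ℕ) × (Fin n →₀ ℕ)) (i : Fin (2*n)) :
    wW q * weylGen ℤ n i ∈ WS n := by
  obtain ⟨a, b⟩ := q
  rcases Nat.lt_or_ge (i:ℕ) n with hi | hi
  · have hgen : weylGen ℤ n i = genX ⟨(i:ℕ), hi⟩ :=
      congrArg (weylGen ℤ n) (Fin.eta i i.isLt).symm
    rw [hgen, wW, mul_assoc, wDP_mul_genX, mul_add, mul_smul_comm, ← mul_assoc]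
    apply Submodule.add_mem
    · have hh : wXP a * genX ⟨(i:ℕ), hi⟩ * wDP b
          = wW (a + Finsupp.single ⟨(i:ℕ), hi⟩ 1, b) := by
        rw [wW, wXP_mul_genX]
      rw [hh]
      exact wW_mem _
    · have hh2 : wXP a * wDP (b - Finsupp.single ⟨(i:ℕ), hi⟩ 1)
          = wW (a, b - Finsupp.single ⟨(i:ℕ), hi⟩ 1) := rfl
      rw [hh2]
      exact Submodule.smul_mem _ _ (wW_mem _)
  · have hgen : weylGen ℤ n i = genD ⟨(i:ℕ) - n, by omega⟩ :=
      congrArg (weylGen ℤ n) (Fin.ext (show (i:ℕ) = n + ((i:ℕ) - n) by omega))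
    rw [hgen, wW, mul_assoc, wDP_mul_genD]
    have hh : wXP a * wDP (b + Finsupp.single ⟨(i:ℕ) - n, by omega⟩ 1)
        = wW (a, b + Finsupp.single ⟨(i:ℕ) - n, by omega⟩ 1) := rfl
    rw [hh]
    exact wW_mem _

lemma WS_mul_gen {x : WeylAlgebra ℤ n} (hx : x ∈ WS n) (i : Fin (2*n)) :
    x * weylGen ℤ n i ∈ WS n := by
  refine Submodule.span_induction ?_ ?_ ?_ ?_ hx
  · rintro _ ⟨q, rfl⟩
    exact wW_mul_gen q i
  · rw [zero_mul]; exact Submodule.zero_mem _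
  · intro y z _ _ hy hz
    rw [add_mul]; exact Submodule.add_mem _ hy hz
  · intro r y _ hy
    rw [smul_mul_assoc]; exact Submodule.smul_mem _ _ hy

lemma weyl_adjoin_top :
    Algebra.adjoin ℤ (Set.range (weylGen ℤ n)) = ⊤ := by
  have hr : Set.range (weylGen ℤ n)
      = (RingQuot.mkAlgHom ℤ (WeylRel ℤ n)) '' (Set.range (FreeAlgebra.ι ℤ)) := by
    rw [← Set.range_comp]
    rfl
  rw [hr, ← AlgHom.map_adjoin, FreeAlgebra.adjoin_range_ι, Algebra.map_top]
  rw [AlgHom.range_eq_top]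
  exact RingQuot.mkAlgHom_surjective ℤ (WeylRel ℤ n)

lemma WS_eq_top : WS n = ⊤ := by
  let T : Subalgebra ℤ (WeylAlgebra ℤ n) :=
    { carrier := {y | ∀ x ∈ WS n, x * y ∈ WS n}
      mul_mem' := fun {y} {z} hy hz x hx => by
        rw [← mul_assoc]; exact hz _ (hy x hx)
      add_mem' := fun {y} {z} hy hz x hx => by
        rw [mul_add]; exact Submodule.add_mem _ (hy x hx) (hz x hx)
      algebraMap_mem' := fun r x hx => by
        rw [← Algebra.commutes r x, ← Algebra.smul_def]
        exact Submodule.smul_mem _ _ hx }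
  have hT : ∀ y : WeylAlgebra ℤ n, y ∈ T := by
    intro y
    have : Algebra.adjoin ℤ (Set.range (weylGen ℤ n)) ≤ T := by
      apply Algebra.adjoin_le
      rintro _ ⟨i, rfl⟩
      intro x hx
      exact WS_mul_gen hx i
    exact this (weyl_adjoin_top (n := n) ▸ Algebra.mem_top)
  apply Submodule.eq_top_iff'.mpr
  intro y
  have := hT y 1 one_mem_WS
  rwa [one_mul] at this

end Span

/-! ### Torsion-freeness via linear independence of normal monomials -/

section Torsion
variable {n : ℕ}

lemma rho_genX (k : Fin n) : weylRho n (genX k) = Xop k := by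
  rw [genX, weylRho_gen, Lop, dif_pos (show ((⟨(k:ℕ), by omega⟩ : Fin (2*n)) : ℕ) < n
    from k.isLt)]

lemma rho_genD (k : Fin n) : weylRho n (genD k) = Dop k := by
  rw [genD, weylRho_gen, Lop, dif_neg (show ¬(((⟨n + (k:ℕ), by omega⟩ : Fin (2*n)) : ℕ) < n)
    by simp)]
  congr 1
  apply Fin.ext
  simp

lemma rho_wW_single (a b m : Fin n →₀ ℕ) (c : ℤ) :
    (weylRho n (wW (a, b))) (Finsupp.single m c)
      = ((∏ k, (m k).descFactorial (b k) : ℕ) : ℤ) •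
          Finsupp.single (m - b + a) c := by
  have hww : wW (a, b) = wXP a * wDP b := rfl
  rw [hww, map_mul, Module.End.mul_apply, wXP, wDP,
    Finset.map_noncommProd, Finset.map_noncommProd]
  have hDeq := Finset.noncommProd_congr rfl
    (fun (x : Fin n) (_ : x ∈ Finset.univ) => by
      rw [map_pow, rho_genD] :
      ∀ x ∈ Finset.univ, weylRho n (genD x ^ b x) = Dop (n := n) x ^ b x)
    (Pairwise.set_pairwise (fun x y _ => Commute.map ((genD_commute x y).pow_pow _ _) (weylRho n)) _)
      (g := fun x => Dop (n := n) x ^ b x)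
  have hXeq := Finset.noncommProd_congr rfl
    (fun (x : Fin n) (_ : x ∈ Finset.univ) => by
      rw [map_pow, rho_genX] :
      ∀ x ∈ Finset.univ, weylRho n (genX x ^ a x) = Xop (n := n) x ^ a x)
    (Pairwise.set_pairwise (fun x y _ => Commute.map ((genX_commute x y).pow_pow _ _) (weylRho n)) _)
      (g := fun x => Xop (n := n) x ^ a x)
  have hDeq' : Finset.univ.noncommProd (fun x => Dop (n := n) x ^ b x) _ =
      Finset.univ.noncommProd (fun x => Dop (n := n) x ^ b x)
        (Pairwise.set_pairwise (fun x y _ => Commute.pow_pow (Dop_comm x y : Commute (Dop x) (Dop y)) _ _) _) := rfl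
  have hXeq' : Finset.univ.noncommProd (fun x => Xop (n := n) x ^ a x) _ =
      Finset.univ.noncommProd (fun x => Xop (n := n) x ^ a x)
        (Pairwise.set_pairwise (fun x y _ => Commute.pow_pow (Xop_comm x y : Commute (Xop x) (Xop y)) _ _) _) := rfl
  rw [hDeq, hXeq, hDeq', hXeq', Dprod_single, map_smul, Xprod_single]
  rw [sum_univ_smul_single, sum_univ_smul_single]

lemma weyl_linearIndependent (w : (Fin n →₀ ℕ) × (Fin n →₀ ℕ) →₀ ℤ)
    (hw : Finsupp.linearCombination ℤ (wW (n := n)) w = 0) : w = 0 := by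
  classical
  by_contra hne
  set Bset := w.support.image Prod.snd with hBset
  have hBne : Bset.Nonempty :=
    (Finsupp.support_nonempty_iff.mpr hne).image _
  obtain ⟨b₀, hb₀B, hb₀min⟩ := Finset.exists_min_image Bset (fun b => ∑ k, b k) hBne
  obtain ⟨q₀, hq₀supp, hq₀snd⟩ := Finset.mem_image.mp hb₀B
  -- apply ρ to the relation and evaluate on δ_{b₀}, then at the coordinate q₀.1
  have h0 : (weylRho n (Finsupp.linearCombination ℤ (wW (n := n)) w))
      (Finsupp.single b₀ 1) = 0 := by
    rw [hw, map_zero, LinearMap.zero_apply]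
  rw [Finsupp.linearCombination_apply, Finsupp.sum, map_sum] at h0
  have h1 : ∀ q ∈ w.support, (weylRho n (w q • wW q)) (Finsupp.single b₀ 1)
      = Finsupp.single (b₀ - q.2 + q.1)
          (w q * ((∏ k, (b₀ k).descFactorial (q.2 k) : ℕ) : ℤ)) := by
    intro q _
    rw [map_smul, LinearMap.smul_apply, show q = (q.1, q.2) from rfl,
      rho_wW_single, smul_smul, Finsupp.smul_single', mul_one]
  have h2 : ∑ q ∈ w.support, Finsupp.single (b₀ - q.2 + q.1)
      (w q * ((∏ k, (b₀ k).descFactorial (q.2 k) : ℕ) : ℤ)) = 0 := by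
    rw [← Finset.sum_congr rfl h1]
    simpa using h0
  have h3 := congrArg (fun f : WM n => f q₀.1) h2
  simp only [Finsupp.finset_sum_apply, Finsupp.coe_zero, Pi.zero_apply] at h3
  rw [Finset.sum_eq_single q₀] at h3
  · -- the q₀ term is nonzero
    have hfact : (∏ k, (b₀ k).descFactorial (b₀ k)) = ∏ k, (b₀ k).factorial := by
      apply Finset.prod_congr rfl
      intro k _
      rw [Nat.descFactorial_self]
    rw [hq₀snd, tsub_self, zero_add, Finsupp.single_eq_same, hfact] at h3
    have hwne : w q₀ ≠ 0 := Finsupp.mem_support_iff.mp hq₀supp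
    have hprod : (0:ℕ) < ∏ k, (b₀ k).factorial :=
      Finset.prod_pos (fun k _ => Nat.factorial_pos _)
    exact (mul_ne_zero hwne (by exact_mod_cast hprod.ne')) h3
  · -- other terms vanish
    intro q hq hqne
    by_cases hzero : (∏ k, (b₀ k).descFactorial (q.2 k)) = 0
    · rw [hzero]
      push_cast
      rw [mul_zero, Finsupp.single_zero, Finsupp.coe_zero, Pi.zero_apply]
    · -- then q.2 ≤ b₀ pointwise, so by minimality q.2 = b₀, so q.1 ≠ q₀.1
      have hle : ∀ k, q.2 k ≤ b₀ k := by
        intro k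
        by_contra hlt
        exact hzero (Finset.prod_eq_zero (Finset.mem_univ k)
          (Nat.descFactorial_eq_zero_iff_lt.mpr (by omega)))
      have hdeg : (∑ k, b₀ k) ≤ ∑ k, q.2 k :=
        hb₀min q.2 (Finset.mem_image.mpr ⟨q, hq, rfl⟩)
      have heq : q.2 = b₀ := by
        ext k
        by_contra hk
        have hklt : q.2 k < b₀ k := lt_of_le_of_ne (hle k) hk
        have : (∑ k, q.2 k) < ∑ k, b₀ k :=
          Finset.sum_lt_sum (fun i _ => hle i) ⟨k, Finset.mem_univ k, hklt⟩
        omega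
      have hne1 : q.1 ≠ q₀.1 := by
        intro hc
        exact hqne (Prod.ext hc (heq.trans hq₀snd.symm))
      rw [heq, tsub_self, zero_add]
      exact Finsupp.single_eq_of_ne' hne1
  · intro hq
    exact absurd hq₀supp hq

lemma weyl_torsionfree (p : ℕ) (hp : p ≠ 0) (x : WeylAlgebra ℤ n)
    (h : p • x = 0) : x = 0 := by
  obtain ⟨v, hv⟩ : ∃ v, Finsupp.linearCombination ℤ (wW (n := n)) v = x := by
    have : x ∈ LinearMap.range (Finsupp.linearCombination ℤ (wW (n := n))) := by
      rw [Finsupp.range_linearCombination]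
      exact (WS_eq_top (n := n) ▸ Submodule.mem_top : x ∈ WS n)
    exact this
  have h2 : Finsupp.linearCombination ℤ (wW (n := n)) ((p:ℤ) • v) = 0 := by
    rw [map_smul, hv, natCast_zsmul, h]
  have h3 : (p:ℤ) • v = 0 := weyl_linearIndependent _ h2
  have h4 : v = 0 := by
    have := smul_eq_zero.mp h3
    rcases this with h5 | h5
    · exact absurd (by exact_mod_cast h5) hp
    · exact h5
  rw [← hv, h4, map_zero]

end Torsion

/-- With the canonical bracket `{a,b} := ([ã,b̃]/p mod p)` on the center of
`A_{n,ℤ}/p`, one has `{y_i, y_j} = -ω_{ij}` for the central generators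
`y_i = x̂_i^p`: for any `c` with `p·c = [x̂_i^p, x̂_j^p]` in `A_{n,ℤ}`, the class
of `c` modulo `p` equals `-ω_{ij}`. -/
theorem stmt18 (p : ℕ) [Fact p.Prime] (n : ℕ) (i j : Fin (2 * n))
    (c : WeylAlgebra ℤ n)
    (hc : p • c = weylGen ℤ n i ^ p * weylGen ℤ n j ^ p -
      weylGen ℤ n j ^ p * weylGen ℤ n i ^ p) :
    ∃ d : WeylAlgebra ℤ n,
      c - ((-weylOmega n i j : ℤ) : WeylAlgebra ℤ n) = p • d := by
  have hp : p.Prime := Fact.out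
  have hrel := gen_rel i j
  set gi := weylGen ℤ n i
  set gj := weylGen ℤ n j
  by_cases h1 : (i:ℕ) = n + (j:ℕ)
  · -- ω = 1
    have hom : weylOmega n i j = 1 := by
      unfold weylOmega
      rw [if_pos h1, if_neg (show ¬(n + (i:ℕ) = (j:ℕ)) by have := j.isLt; omega)]
      norm_num
    have hda : gi * gj = gj * gi + 1 := by
      rw [hom] at hrel
      push_cast at hrel
      linear_combination (norm := noncomm_ring) hrel
    obtain ⟨e, he⟩ := wl_comm_pow hp hda
    have htc : (p:ℤ) • c = (p:ℤ) • (-1 : WeylAlgebra ℤ n) + ((p:ℤ)^2) • e := by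
      rw [natCast_zsmul, hc, he]
    have hzero : c + 1 - (p:ℤ) • e = 0 := by
      apply weyl_torsionfree p hp.ne_zero
      rw [← natCast_zsmul]
      calc (p:ℤ) • (c + 1 - (p:ℤ) • e)
          = (p:ℤ) • c + ((p:ℤ) • (1 : WeylAlgebra ℤ n) - ((p:ℤ)^2) • e) := by
            module
      _ = 0 := by rw [htc]; module
    refine ⟨e, ?_⟩
    rw [hom]
    push_cast
    rw [sub_neg_eq_add, ← natCast_zsmul]
    rwa [sub_eq_zero] at hzero
  · by_cases h2 : n + (i:ℕ) = (j:ℕ)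
    · -- ω = -1
      have hom : weylOmega n i j = -1 := by
        unfold weylOmega
        rw [if_neg h1, if_pos h2]
        norm_num
      have hda : gj * gi = gi * gj + 1 := by
        rw [hom] at hrel
        push_cast at hrel
        linear_combination (norm := noncomm_ring) -hrel
      obtain ⟨e, he⟩ := wl_comm_pow hp hda
      have htc : (p:ℤ) • c = (p:ℤ) • (1 : WeylAlgebra ℤ n) - ((p:ℤ)^2) • e := by
        rw [natCast_zsmul, hc]
        rw [← neg_sub (gj ^ p * gi ^ p) (gi ^ p * gj ^ p), he]
        module
      have hzero : c - 1 + (p:ℤ) • e = 0 := by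
        apply weyl_torsionfree p hp.ne_zero
        rw [← natCast_zsmul]
        calc (p:ℤ) • (c - 1 + (p:ℤ) • e)
            = (p:ℤ) • c - ((p:ℤ) • (1 : WeylAlgebra ℤ n) - ((p:ℤ)^2) • e) := by
              module
        _ = 0 := by rw [htc]; module
      refine ⟨-e, ?_⟩
      rw [hom]
      push_cast
      rw [← natCast_zsmul]
      linear_combination (norm := module) hzero
    · -- ω = 0
      have hom : weylOmega n i j = 0 := by
        unfold weylOmega
        rw [if_neg h1, if_neg h2]
        norm_num
      have hcomm : Commute gi gj := by
        rw [hom] at hrel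
        push_cast at hrel
        exact sub_eq_zero.mp hrel
      have hczero : c = 0 := by
        apply weyl_torsionfree p hp.ne_zero
        rw [hc, (hcomm.pow_pow p p).eq, sub_self]
      refine ⟨0, ?_⟩
      rw [hom, hczero]
      simp
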